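/- Let (p₀,e₀,m₀) with p₀,e₀,m₀ ≥ 0, p₀+e₀+m₀ = 1 and p₀ > m₀. If p₀ - 4√(p₀ m₀) > 0 then the achievable rate of the three-message quantized decoder, C = P(D_∞ = (1,0,0)), is strictly positive; in particular C ≥ p₀ - 4√(p₀ m₀). -/

import Mathlib

open MeasureTheory ProbabilityTheory Filter

/-- Variable-node transform of a ternary density `(p,e,m)`. -/
def vplus (d : ℝ × ℝ × ℝ) : ℝ × ℝ × ℝ :=
  (d.1^2 + 2*d.1*d.2.1, d.2.1^2 + 2*d.1*d.2.2, d.2.2^2 + 2*d.2.1*d.2.2)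

/-- Check-node transform of a ternary density `(p,e,m)`. -/
def vminus (d : ℝ × ℝ × ℝ) : ℝ × ℝ × ℝ :=
  (d.1^2 + d.2.2^2, 1 - (1 - d.2.1)^2, 2*d.1*d.2.2)

noncomputable def Fd (d : ℝ × ℝ × ℝ) : ℝ := d.1 - 4 * Real.sqrt (d.1 * d.2.2)

def InS (d : ℝ × ℝ × ℝ) : Prop := 0 ≤ d.1 ∧ 0 ≤ d.2.1 ∧ 0 ≤ d.2.2 ∧ d.1 + d.2.1 + d.2.2 = 1

lemma InS_vplus {d : ℝ × ℝ × ℝ} (h : InS d) : InS (vplus d) := by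
  obtain ⟨h1, h2, h3, h4⟩ := h
  simp only [InS, vplus]
  refine ⟨by nlinarith [sq_nonneg d.1, mul_nonneg h1 h2],
    by nlinarith [sq_nonneg d.2.1, mul_nonneg h1 h3],
    by nlinarith [sq_nonneg d.2.2, mul_nonneg h2 h3], ?_⟩
  linear_combination (d.1 + d.2.1 + d.2.2 + 1) * h4

lemma InS_vminus {d : ℝ × ℝ × ℝ} (h : InS d) : InS (vminus d) := by
  obtain ⟨h1, h2, h3, h4⟩ := h
  have he1 : d.2.1 ≤ 1 := by linarith
  simp only [InS, vminus]
  refine ⟨by nlinarith [sq_nonneg d.1, sq_nonneg d.2.2], by nlinarith,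
    by nlinarith [mul_nonneg h1 h3], ?_⟩
  linear_combination (d.1 + d.2.2 + 1 - d.2.1) * h4

lemma Fd_bound {d : ℝ × ℝ × ℝ} (h : InS d) : |Fd d| ≤ 5 := by
  obtain ⟨h1, h2, h3, h4⟩ := h
  have hle : d.1 * d.2.2 ≤ 1 := by nlinarith
  have hs1 : Real.sqrt (d.1 * d.2.2) ≤ 1 := by
    calc Real.sqrt (d.1 * d.2.2) ≤ Real.sqrt 1 := Real.sqrt_le_sqrt hle
    _ = 1 := Real.sqrt_one
  have hs0 : 0 ≤ Real.sqrt (d.1 * d.2.2) := Real.sqrt_nonneg _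
  rw [abs_le]
  constructor <;> simp only [Fd] <;> nlinarith

lemma poly_core (a b r : ℝ) (ha : 0 ≤ a) (hb : 0 ≤ b) (hr : r^2 = 2)
    (hr1 : (1.414:ℝ) ≤ r) (hr2 : r ≤ 1.415) :
    0 ≤ (a^2+b^2)*(b^4-2*a^2*b^2) + a*b*((6-4*r)*(a^4+b^4)+(12-4*r)*a^2*b^2) := by
  have hq : 0 ≤ 0.34*a^4 - 2*a^3*b + 6.34*a^2*b^2 - a*b^3 + 0.34*b^4 := by
    nlinarith [sq_nonneg (17*a^2 - 50*a*b), sq_nonneg (10*a*b - 3*b^2), sq_nonneg (a*b-b^2),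
      sq_nonneg (a*b), sq_nonneg b, mul_nonneg ha hb]
  nlinarith [mul_nonneg (mul_nonneg ha hb) hq, mul_nonneg ha hb, pow_nonneg hb 6,
    mul_nonneg (mul_nonneg ha hb) (add_nonneg (pow_nonneg ha 4) (pow_nonneg hb 4)),
    mul_nonneg (mul_nonneg (mul_nonneg ha ha) ha) (mul_nonneg (mul_nonneg hb hb) hb)]

set_option maxHeartbeats 1000000 in
lemma key (p e m : ℝ) (hp : 0 ≤ p) (he : 0 ≤ e) (hm : 0 ≤ m) (hs : p + e + m = 1) :
    2*(p - 4*Real.sqrt (p*m)) ≤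
      ((p^2+2*p*e) - 4*Real.sqrt ((p^2+2*p*e)*(m^2+2*e*m)))
      + ((p^2+m^2) - 4*Real.sqrt ((p^2+m^2)*(2*p*m))) := by
  set s := Real.sqrt (p*m) with hsdef
  have hs0 : 0 ≤ s := Real.sqrt_nonneg _
  have hs2 : s^2 = p*m := Real.sq_sqrt (mul_nonneg hp hm)
  set A := Real.sqrt ((p^2+2*p*e)*(m^2+2*e*m)) with hA
  set C := Real.sqrt ((p^2+m^2)*(2*p*m)) with hC
  have hA0 : 0 ≤ A := Real.sqrt_nonneg _
  have hC0 : 0 ≤ C := Real.sqrt_nonneg _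
  have h1e : (1:ℝ)+3*e = p+m+4*e := by linarith
  have hAle : A ≤ s*(4-3*(p+m))/2 := by
    have h3 : s*(4-3*(p+m))/2 = s*(1+3*e)/2 := by rw [show (4:ℝ)-3*(p+m) = 1+3*e by linarith]
    rw [h3]
    have hsq : (s*(1+3*e)/2)^2 = p*m*((p+m+4*e)/2)^2 := by
      rw [h1e, div_pow, mul_pow, hs2]; ring
    have h1 : (p^2+2*p*e)*(m^2+2*e*m) ≤ (s*(1+3*e)/2)^2 := by
      rw [hsq]; nlinarith [mul_nonneg (mul_nonneg hp hm) (sq_nonneg (p-m))]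
    calc A ≤ Real.sqrt ((s*(1+3*e)/2)^2) := Real.sqrt_le_sqrt h1
    _ = s*(1+3*e)/2 := Real.sqrt_sq (by positivity)
  set r := Real.sqrt 2 with hrdef
  have hr2 : r^2 = 2 := Real.sq_sqrt (by norm_num)
  have hr0 : 0 ≤ r := Real.sqrt_nonneg _
  have hrlb : (1.414:ℝ) ≤ r := by nlinarith
  have hrub : r ≤ 1.415 := by nlinarith
  have hCle : (p+m)*C ≤ r*s*(p^2+p*m+m^2) := by
    have hC2 : C^2 = (p^2+m^2)*(2*p*m) := Real.sq_sqrt (by positivity)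
    have h1 : ((p+m)*C)^2 ≤ (r*s*(p^2+p*m+m^2))^2 := by
      have e1 : (r*s*(p^2+p*m+m^2))^2 = 2*(p*m)*(p^2+p*m+m^2)^2 := by
        rw [mul_pow, mul_pow, hr2, hs2]
      have e2 : ((p+m)*C)^2 = (p+m)^2*((p^2+m^2)*(2*p*m)) := by
        rw [mul_pow, hC2]
      rw [e1, e2]
      nlinarith [mul_nonneg (mul_nonneg hp hm) (sq_nonneg (p*m))]
    calc (p+m)*C = Real.sqrt (((p+m)*C)^2) := (Real.sqrt_sq (by positivity)).symm
    _ ≤ Real.sqrt ((r*s*(p^2+p*m+m^2))^2) := Real.sqrt_le_sqrt h1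
    _ = r*s*(p^2+p*m+m^2) := Real.sqrt_sq (by positivity)
  have hmain : 4*A + 4*C ≤ m^2 - 2*p*m + 8*s := by
    rcases eq_or_lt_of_le (show (0:ℝ) ≤ p + m from by positivity) with h0 | h0
    · have hp0 : p = 0 := by linarith
      have hm0 : m = 0 := by linarith
      have hA' : A = 0 := by rw [hA, hp0, hm0]; simp
      have hC' : C = 0 := by rw [hC, hp0, hm0]; simp
      have hss : s = 0 := by rw [hsdef, hp0, hm0]; simp
      have h1 : m^2 = 0 := by rw [hm0]; ring
      have h2 : p*m = 0 := by rw [hm0]; ring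
      linarith
    · set a := Real.sqrt p with hadef
      set b := Real.sqrt m with hbdef
      have ha2 : a^2 = p := Real.sq_sqrt hp
      have hb2 : b^2 = m := Real.sq_sqrt hm
      have ha0 : 0 ≤ a := Real.sqrt_nonneg _
      have hb0 : 0 ≤ b := Real.sqrt_nonneg _
      have hab : s = a*b := by rw [hsdef, hadef, hbdef, Real.sqrt_mul hp]
      have hpos : 0 ≤ (p+m)*(m^2-2*p*m) + s*(6*(p+m)^2 - 4*r*(p^2+p*m+m^2)) := by
        have hcore := poly_core a b r ha0 hb0 hr2 hrlb hrub
        have heq : (p+m)*(m^2-2*p*m) + s*(6*(p+m)^2 - 4*r*(p^2+p*m+m^2))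
            = (a^2+b^2)*(b^4-2*a^2*b^2) + a*b*((6-4*r)*(a^4+b^4)+(12-4*r)*a^2*b^2) := by
          rw [← ha2, ← hb2, hab]; ring
        rw [heq]; exact hcore
      have t1 : (4*(p+m))*A ≤ (4*(p+m))*(s*(4-3*(p+m))/2) :=
        mul_le_mul_of_nonneg_left hAle (by linarith)
      have hmul : (p+m)*(4*A+4*C) ≤ (p+m)*(m^2-2*p*m+8*s) := by
        linarith [t1, hCle, hpos]
      exact le_of_mul_le_mul_left hmul h0
  have hp1 : p*(p+e+m) = p := by rw [hs]; ring
  linarith [hmain, hp1]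

lemma key' {d : ℝ × ℝ × ℝ} (h : InS d) : 2 * Fd d ≤ Fd (vplus d) + Fd (vminus d) := by
  obtain ⟨h1, h2, h3, h4⟩ := h
  have hk := key d.1 d.2.1 d.2.2 h1 h2 h3 h4
  simp only [Fd, vplus, vminus]
  linarith [hk]

/-- deterministic trajectory as a function of the first bits -/
def traj (d0 : ℝ × ℝ × ℝ) : (n : ℕ) → (Fin n → Bool) → ℝ × ℝ × ℝ
  | 0, _ => d0
  | (n+1), f => if f (Fin.last n) then vplus (traj d0 n (fun i => f i.castSucc))
                else vminus (traj d0 n (fun i => f i.castSucc))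

lemma cont_Fd : Continuous Fd := by
  unfold Fd; fun_prop

lemma cont_vplus : Continuous vplus := by unfold vplus; fun_prop
lemma cont_vminus : Continuous vminus := by unfold vminus; fun_prop

/-- If the initial density satisfies `F(D₀) = p₀ - 4√(p₀m₀) > 0` (and `p₀ > m₀`), then
the achievable rate `C = P(D_∞ = (1,0,0))` of the three-message quantized decoder is
strictly positive; in particular `C ≥ p₀ - 4√(p₀ m₀)`. -/
theorem stmt_18 {Ω : Type*} [MeasurableSpace Ω] (μ : Measure Ω) [IsProbabilityMeasure μ]
    (B : ℕ → Ω → Bool) (D : ℕ → Ω → ℝ × ℝ × ℝ) (Dinf : Ω → ℝ × ℝ × ℝ)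
    (p₀ e₀ m₀ : ℝ) (hp₀ : 0 ≤ p₀) (he₀ : 0 ≤ e₀) (hm₀ : 0 ≤ m₀)
    (hsum : p₀ + e₀ + m₀ = 1) (hpm : m₀ < p₀)
    (hF : 0 < p₀ - 4 * Real.sqrt (p₀ * m₀))
    (hBmeas : ∀ n, Measurable (B n))
    (hBindep : iIndepFun B μ)
    (hBfair : ∀ n, μ {ω | B n ω = true} = 1/2)
    (hD0 : ∀ ω, D 0 ω = (p₀, e₀, m₀))
    (hstep : ∀ n ω, D (n+1) ω = if B n ω then vplus (D n ω) else vminus (D n ω))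
    (hconv : ∀ᵐ ω ∂μ, Tendsto (fun n => D n ω) atTop (nhds (Dinf ω)))
    (hlim : ∀ᵐ ω ∂μ, Dinf ω = ((1:ℝ), (0:ℝ), (0:ℝ)) ∨ Dinf ω = ((0:ℝ), (1:ℝ), (0:ℝ))) :
    ENNReal.ofReal (p₀ - 4 * Real.sqrt (p₀ * m₀))
        ≤ μ {ω | Dinf ω = ((1:ℝ), (0:ℝ), (0:ℝ))} ∧
      0 < μ {ω | Dinf ω = ((1:ℝ), (0:ℝ), (0:ℝ))} := by
  -- trajectory representation
  have hDeq : ∀ n, D n = fun ω => traj (p₀, e₀, m₀) n (fun i => B i ω) := by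
    intro n
    induction n with
    | zero => funext ω; rw [hD0]; rfl
    | succ n ih =>
      funext ω
      rw [hstep n ω, ih]
      simp only [traj, Fin.val_last]
      congr 1
  -- measurability of D n
  have hDmeas : ∀ n, Measurable (D n) := by
    intro n
    rw [hDeq n]
    have : Measurable fun ω => (fun i : Fin n => B i ω) :=
      measurable_pi_lambda _ (fun i => hBmeas i)
    exact (measurable_of_countable (traj (p₀, e₀, m₀) n)).comp this
  -- simplex invariant
  have hDS : ∀ n ω, InS (D n ω) := by
    intro n
    induction n with
    | zero => intro ω; rw [hD0]; exact ⟨hp₀, he₀, hm₀, hsum⟩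
    | succ n ih =>
      intro ω
      rw [hstep n ω]
      by_cases h : B n ω
      · simp only [h, if_true]; exact InS_vplus (ih ω)
      · simp only [h, if_false]; exact InS_vminus (ih ω)
  -- integrability helper
  have hint : ∀ (f : Ω → ℝ), Measurable f → (∀ ω, |f ω| ≤ 5) → Integrable f μ := by
    intro f hf hb
    exact (integrable_const (5:ℝ)).mono' hf.aestronglyMeasurable
      (ae_of_all _ (fun ω => by simpa using hb ω))
  -- independence of B n and D n
  have hIndep : ∀ n, IndepFun (B n) (D n) μ := by
    intro n
    have h := hBindep.indepFun_finset {n} (Finset.range n)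
      (by simp [Finset.disjoint_left]) hBmeas
    have h2 := h.comp
      (φ := fun g : ({x // x ∈ ({n} : Finset ℕ)} → Bool) => g ⟨n, Finset.mem_singleton_self n⟩)
      (ψ := fun g : ({x // x ∈ Finset.range n} → Bool) =>
        traj (p₀, e₀, m₀) n (fun i : Fin n => g ⟨i.1, Finset.mem_range.mpr i.2⟩))
      (measurable_of_countable _) (measurable_of_countable _)
    rw [hDeq n]
    exact h2
  -- the expectation is nondecreasing
  have hmono : ∀ n, ∫ ω, Fd (D n ω) ∂μ ≤ ∫ ω, Fd (D (n+1) ω) ∂μ := by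
    intro n
    set X := fun ω => Fd (vplus (D n ω)) with hXdef
    set Y := fun ω => Fd (vminus (D n ω)) with hYdef
    set χ := fun ω => (if B n ω then (1:ℝ) else 0) with hχdef
    have hXm : Measurable X := (cont_Fd.comp cont_vplus).measurable.comp (hDmeas n)
    have hYm : Measurable Y := (cont_Fd.comp cont_vminus).measurable.comp (hDmeas n)
    have hχm : Measurable χ :=
      (measurable_of_countable (fun b : Bool => if b then (1:ℝ) else 0)).comp (hBmeas n)
    have hχm' : Measurable (fun ω => 1 - χ ω) := measurable_const.sub hχm
    have hXb : ∀ ω, |X ω| ≤ 5 := fun ω => Fd_bound (InS_vplus (hDS n ω))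
    have hYb : ∀ ω, |Y ω| ≤ 5 := fun ω => Fd_bound (InS_vminus (hDS n ω))
    have hχb : ∀ ω, |χ ω| ≤ 5 := by
      intro ω; simp only [hχdef]; by_cases h : B n ω <;> simp [h] <;> norm_num
    have hXint : Integrable X μ := hint X hXm hXb
    have hYint : Integrable Y μ := hint Y hYm hYb
    have hχint : Integrable χ μ := hint χ hχm hχb
    have hχint' : Integrable (fun ω => 1 - χ ω) μ := (integrable_const (1:ℝ)).sub hχint
    have hIX : IndepFun χ X μ :=
      (hIndep n).comp (measurable_of_countable (fun b : Bool => if b then (1:ℝ) else 0))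
        (cont_Fd.comp cont_vplus).measurable
    have hIY : IndepFun (fun ω => 1 - χ ω) Y μ :=
      (hIndep n).comp
        (measurable_of_countable (fun b : Bool => 1 - (if b then (1:ℝ) else 0)))
        (cont_Fd.comp cont_vminus).measurable
    have hEχ : ∫ ω, χ ω ∂μ = 1/2 := by
      have hχind : χ = Set.indicator ((B n)⁻¹' {true}) (fun _ => (1:ℝ)) := by
        funext ω
        by_cases h : B n ω <;> simp [hχdef, Set.indicator_apply, h]
      rw [hχind, integral_indicator_const (1:ℝ) ((hBmeas n) (measurableSet_singleton true))]
      have hset : (B n)⁻¹' {true} = {ω | B n ω = true} := by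
        ext ω; simp
      rw [hset, measureReal_def, hBfair n]
      simp [ENNReal.toReal_div]
    have hEχ' : ∫ ω, (1 - χ ω) ∂μ = 1/2 := by
      rw [integral_sub (integrable_const 1) hχint]
      simp [hEχ]
      norm_num
    have h1 : ∫ ω, χ ω * X ω ∂μ = (1/2) * ∫ ω, X ω ∂μ := by
      have := hIX.integral_mul_eq_mul_integral hχint.aestronglyMeasurable hXint.aestronglyMeasurable
      calc ∫ ω, χ ω * X ω ∂μ = ∫ ω, (χ * X) ω ∂μ := rfl
      _ = (∫ ω, χ ω ∂μ) * ∫ ω, X ω ∂μ := this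
      _ = (1/2) * ∫ ω, X ω ∂μ := by rw [hEχ]
    have h2 : ∫ ω, (1 - χ ω) * Y ω ∂μ = (1/2) * ∫ ω, Y ω ∂μ := by
      have := hIY.integral_mul_eq_mul_integral hχint'.aestronglyMeasurable hYint.aestronglyMeasurable
      calc ∫ ω, (1 - χ ω) * Y ω ∂μ = ∫ ω, ((fun ω => 1 - χ ω) * Y) ω ∂μ := rfl
      _ = (∫ ω, (1 - χ ω) ∂μ) * ∫ ω, Y ω ∂μ := this
      _ = (1/2) * ∫ ω, Y ω ∂μ := by rw [hEχ']
    have hrw : (fun ω => Fd (D (n+1) ω)) = fun ω => χ ω * X ω + (1 - χ ω) * Y ω := by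
      funext ω
      rw [hstep n ω]
      by_cases h : B n ω <;> simp [hχdef, hXdef, hYdef, h]
    have hprod1 : Integrable (fun ω => χ ω * X ω) μ := by
      apply hint _ (hχm.mul hXm)
      intro ω
      calc |χ ω * X ω| = |χ ω| * |X ω| := abs_mul _ _
      _ ≤ 1 * 5 := by
          apply mul_le_mul _ (hXb ω) (abs_nonneg _) zero_le_one
          simp only [hχdef]; by_cases h : B n ω <;> simp [h]
      _ ≤ 5 := by norm_num
    have hprod2 : Integrable (fun ω => (1 - χ ω) * Y ω) μ := by
      apply hint _ (hχm'.mul hYm)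
      intro ω
      calc |(1 - χ ω) * Y ω| = |1 - χ ω| * |Y ω| := abs_mul _ _
      _ ≤ 1 * 5 := by
          apply mul_le_mul _ (hYb ω) (abs_nonneg _) zero_le_one
          simp only [hχdef]; by_cases h : B n ω <;> simp [h]
      _ ≤ 5 := by norm_num
    have hsplit : ∫ ω, Fd (D (n+1) ω) ∂μ = (1/2) * ∫ ω, X ω ∂μ + (1/2) * ∫ ω, Y ω ∂μ := by
      rw [hrw, integral_add hprod1 hprod2, h1, h2]
    rw [hsplit]
    have hDnint : Integrable (fun ω => Fd (D n ω)) μ :=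
      hint _ (cont_Fd.measurable.comp (hDmeas n)) (fun ω => Fd_bound (hDS n ω))
    have hkey : ∀ ω, 2 * Fd (D n ω) ≤ X ω + Y ω := fun ω => key' (hDS n ω)
    have hmono' : ∫ ω, 2 * Fd (D n ω) ∂μ ≤ ∫ ω, (X ω + Y ω) ∂μ :=
      integral_mono (hDnint.const_mul 2) (hXint.add hYint) hkey
    rw [integral_add hXint hYint] at hmono'
    have h2int : ∫ ω, 2 * Fd (D n ω) ∂μ = 2 * ∫ ω, Fd (D n ω) ∂μ := integral_const_mul 2 _
    linarith
  -- I_0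
  have hI0 : ∫ ω, Fd (D 0 ω) ∂μ = p₀ - 4 * Real.sqrt (p₀ * m₀) := by
    have h0 : (fun ω => Fd (D 0 ω)) = fun _ => Fd (p₀, e₀, m₀) := by
      funext ω; rw [hD0]
    rw [h0, integral_const]
    simp [Fd]
  have hIn : ∀ n, p₀ - 4 * Real.sqrt (p₀ * m₀) ≤ ∫ ω, Fd (D n ω) ∂μ := by
    intro n; induction n with
    | zero => rw [hI0]
    | succ n ih => exact ih.trans (hmono n)
  -- dominated convergence
  have htend : Tendsto (fun n => ∫ ω, Fd (D n ω) ∂μ) atTop (nhds (∫ ω, Fd (Dinf ω) ∂μ)) := by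
    apply tendsto_integral_of_dominated_convergence (fun _ => (5:ℝ))
      (fun n => (cont_Fd.measurable.comp (hDmeas n)).aestronglyMeasurable)
      (integrable_const 5)
      (fun n => ae_of_all _ (fun ω => by simpa using Fd_bound (hDS n ω)))
      (hconv.mono (fun ω h => (cont_Fd.tendsto _).comp h))
  have hlimI : p₀ - 4 * Real.sqrt (p₀ * m₀) ≤ ∫ ω, Fd (Dinf ω) ∂μ :=
    ge_of_tendsto htend (Filter.Eventually.of_forall hIn)
  -- identify the limit integral
  have hDinfAE : AEMeasurable Dinf μ :=
    aemeasurable_of_tendsto_metrizable_ae' (fun n => (hDmeas n).aemeasurable) hconv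
  set g := hDinfAE.mk Dinf with hgdef
  have hgmeas : Measurable g := hDinfAE.measurable_mk
  have hgae : Dinf =ᵐ[μ] g := hDinfAE.ae_eq_mk
  set A := {ω | g ω = ((1:ℝ), (0:ℝ), (0:ℝ))} with hAdef
  have hAmeas : MeasurableSet A := hgmeas (measurableSet_singleton _)
  have hind : (fun ω => Fd (Dinf ω)) =ᵐ[μ] A.indicator (fun _ => (1:ℝ)) := by
    filter_upwards [hlim, hgae] with ω h1 h2
    rcases h1 with h | h
    · have hmem : ω ∈ A := by
        simp only [hAdef, Set.mem_setOf_eq]; rw [← h2, h]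
      rw [h, Set.indicator_of_mem hmem]
      simp [Fd]
    · have hnmem : ω ∉ A := by
        simp only [hAdef, Set.mem_setOf_eq]; rw [← h2, h]
        intro hc
        have := congrArg Prod.fst hc
        norm_num at this
      rw [h, Set.indicator_of_notMem hnmem]
      simp [Fd]
  have hintval : ∫ ω, Fd (Dinf ω) ∂μ = (μ A).toReal := by
    rw [integral_congr_ae hind, integral_indicator_const (1:ℝ) hAmeas]
    simp [measureReal_def]
  -- transfer to the target set
  have hnull : μ {ω | ¬ (Dinf ω = g ω)} = 0 := ae_iff.mp hgae
  have hsub : A ⊆ {ω | Dinf ω = ((1:ℝ), (0:ℝ), (0:ℝ))} ∪ {ω | ¬ (Dinf ω = g ω)} := by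
    intro ω hω
    by_cases hc : Dinf ω = g ω
    · left
      simp only [Set.mem_setOf_eq]
      rw [hc]
      exact hω
    · right
      exact hc
  have hμA : μ A ≤ μ {ω | Dinf ω = ((1:ℝ), (0:ℝ), (0:ℝ))} := by
    calc μ A ≤ μ ({ω | Dinf ω = ((1:ℝ), (0:ℝ), (0:ℝ))} ∪ {ω | ¬ (Dinf ω = g ω)}) :=
        measure_mono hsub
    _ ≤ μ {ω | Dinf ω = ((1:ℝ), (0:ℝ), (0:ℝ))} + μ {ω | ¬ (Dinf ω = g ω)} :=
        measure_union_le _ _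
    _ = μ {ω | Dinf ω = ((1:ℝ), (0:ℝ), (0:ℝ))} := by rw [hnull, add_zero]
  have hofreal : ENNReal.ofReal (p₀ - 4 * Real.sqrt (p₀ * m₀)) ≤ μ A :=
    ENNReal.ofReal_le_of_le_toReal (hlimI.trans_eq hintval)
  have hfinal := hofreal.trans hμA
  exact ⟨hfinal, lt_of_lt_of_le (ENNReal.ofReal_pos.mpr hF) hfinal⟩
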